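/- Let B = t(α₁²+α₂²+α₃²+α₄²) + u(α₁α₄ − α₂α₃) + v(β₁²+β₂²) + w(γ₁²+γ₂²) be an ad(g_e)-invariant inner product on m = g_a ⊕ g_b ⊕ g_c ⊂ so(5). Then B is naturally reductive, i.e. B([Z,X]_m, Y) + B(X, [Z,Y]_m) = 0 for all X, Y, Z ∈ m (where [·,·]_m denotes the projection of the bracket onto m), if and only if t = v = w and u = 0. -/

import Mathlib

open Matrix

/-- Elementary skew-symmetric matrix: `1` at `(i,j)`, `-1` at `(j,i)` (0-based indices). -/
def E (i j : Fin 5) : Matrix (Fin 5) (Fin 5) ℝ :=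
  Matrix.single i j 1 - Matrix.single j i 1

/-- `m = g_a ⊕ g_b ⊕ g_c = span{A₁,A₂,A₃,A₄,B₁,B₂,C₁,C₂}`. -/
noncomputable def mm : Submodule ℝ (Matrix (Fin 5) (Fin 5) ℝ) :=
  Submodule.span ℝ {E 0 2, E 0 3, E 1 2, E 1 3, E 0 4, E 1 4, E 2 4, E 3 4}

/-- Projection of `so(5)` onto `m` along `g_e = span{E 0 1, E 2 3}`: it kills the
entries at positions `(0,1), (1,0), (2,3), (3,2)`. -/
def projm : Matrix (Fin 5) (Fin 5) ℝ →ₗ[ℝ] Matrix (Fin 5) (Fin 5) ℝ where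
  toFun X := Matrix.of fun i j =>
    if (i = 0 ∧ j = 1) ∨ (i = 1 ∧ j = 0) ∨ (i = 2 ∧ j = 3) ∨ (i = 3 ∧ j = 2) then 0
    else X i j
  map_add' X Y := by
    ext i j
    by_cases h : (i = 0 ∧ j = 1) ∨ (i = 1 ∧ j = 0) ∨ (i = 2 ∧ j = 3) ∨ (i = 3 ∧ j = 2) <;>
      simp [h]
  map_smul' c X := by
    ext i j
    by_cases h : (i = 0 ∧ j = 1) ∨ (i = 1 ∧ j = 0) ∨ (i = 2 ∧ j = 3) ∨ (i = 3 ∧ j = 2) <;>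
      simp [h]

/-- The `ad(g_e)`-invariant inner product
`B = t(α₁²+α₂²+α₃²+α₄²) + u(α₁α₄ - α₂α₃) + v(β₁²+β₂²) + w(γ₁²+γ₂²)` on `m`,
written in the coordinates `αᵢ, βᵢ, γᵢ` (upper-triangular matrix entries). -/
noncomputable def Bf (t u v w : ℝ) (X Y : Matrix (Fin 5) (Fin 5) ℝ) : ℝ :=
  t * (X 0 2 * Y 0 2 + X 0 3 * Y 0 3 + X 1 2 * Y 1 2 + X 1 3 * Y 1 3)
  + u / 2 * (X 0 2 * Y 1 3 + X 1 3 * Y 0 2 - X 0 3 * Y 1 2 - X 1 2 * Y 0 3)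
  + v * (X 0 4 * Y 0 4 + X 1 4 * Y 1 4)
  + w * (X 2 4 * Y 2 4 + X 3 4 * Y 3 4)


private lemma mem_mm' {X : Matrix (Fin 5) (Fin 5) ℝ} (h : X ∈ mm) :
    ∃ a b c d e f g k : ℝ, X = a • E 0 2 + b • E 0 3 + c • E 1 2 + d • E 1 3
      + e • E 0 4 + f • E 1 4 + g • E 2 4 + k • E 3 4 := by
  have hs : ({E 0 2, E 0 3, E 1 2, E 1 3, E 0 4, E 1 4, E 2 4, E 3 4} : Set (Matrix (Fin 5) (Fin 5) ℝ))
      = Set.range ![E 0 2, E 0 3, E 1 2, E 1 3, E 0 4, E 1 4, E 2 4, E 3 4] := by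
    ext x; simp [Matrix.range_cons]; tauto
  rw [mm, hs, Submodule.mem_span_range_iff_exists_fun ℝ] at h
  obtain ⟨c, hc⟩ := h
  exact ⟨c 0, c 1, c 2, c 3, c 4, c 5, c 6, c 7, by rw [← hc, Fin.sum_univ_eight]; rfl⟩

private lemma comb_eq' (a b c d e f g k : ℝ) :
    a • E 0 2 + b • E 0 3 + c • E 1 2 + d • E 1 3
      + e • E 0 4 + f • E 1 4 + g • E 2 4 + k • E 3 4
    = !![0, 0, a, b, e; 0, 0, c, d, f; -a, -c, 0, 0, g; -b, -d, 0, 0, k;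
        -e, -f, -g, -k, 0] := by
  ext i j
  fin_cases i <;> fin_cases j <;>
    simp [E, Matrix.single, Matrix.add_apply, Matrix.smul_apply]

private def M' (a b c d e f g k : ℝ) : Matrix (Fin 5) (Fin 5) ℝ :=
  !![0, 0, a, b, e; 0, 0, c, d, f; -a, -c, 0, 0, g; -b, -d, 0, 0, k; -e, -f, -g, -k, 0]

private lemma key' (s a b c d e f g k a' b' c' d' e' f' g' k' a2 b2 c2 d2 e2 f2 g2 k2 : ℝ) :
    Bf s 0 s s (projm ⁅M' a2 b2 c2 d2 e2 f2 g2 k2, M' a b c d e f g k⁆) (M' a' b' c' d' e' f' g' k')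
    + Bf s 0 s s (M' a b c d e f g k) (projm ⁅M' a2 b2 c2 d2 e2 f2 g2 k2, M' a' b' c' d' e' f' g' k'⁆) = 0 := by
  simp only [Bf, projm, Ring.lie_def, LinearMap.coe_mk, AddHom.coe_mk, Matrix.of_apply,
    Matrix.sub_apply, Matrix.mul_apply, Fin.sum_univ_five, M']
  simp only [Matrix.cons_val', Matrix.cons_val, Matrix.cons_val_zero, Matrix.cons_val_one, Matrix.head_cons, Matrix.cons_val_fin_one]
  norm_num
  simp only [Fin.reduceEq, and_false, false_and, false_or, or_false, and_true, true_and,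
    if_false, if_true, reduceIte]
  ring

private lemma gen_mem' (i j : Fin 5)
    (hij : E i j ∈ ({E 0 2, E 0 3, E 1 2, E 1 3, E 0 4, E 1 4, E 2 4, E 3 4} :
      Set (Matrix (Fin 5) (Fin 5) ℝ))) : E i j ∈ mm := Submodule.subset_span hij

/-- The metric associated with `B` is naturally reductive, i.e.
`B(⁅Z,X⁆_m, Y) + B(X, ⁅Z,Y⁆_m) = 0` for all `X, Y, Z ∈ m`, if and only if
`t = v = w` and `u = 0`. -/
theorem naturally_reductive_iff
    (t u v w : ℝ) (ht : 0 < t) (hv : 0 < v) (hw : 0 < w) (htu : u ^ 2 < 4 * t ^ 2) :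
    (∀ X ∈ mm, ∀ Y ∈ mm, ∀ Z ∈ mm,
        Bf t u v w (projm ⁅Z, X⁆) Y + Bf t u v w X (projm ⁅Z, Y⁆) = 0) ↔
      (t = v ∧ v = w ∧ u = 0) := by
  constructor
  · intro h
    have m1 : E 0 2 ∈ mm := gen_mem' 0 2 (by left; rfl)
    have m2 : E 2 4 ∈ mm := gen_mem' 2 4 (by right;right;right;right;right;right;left;rfl)
    have m3 : E 0 4 ∈ mm := gen_mem' 0 4 (by right;right;right;right;left;rfl)
    have m4 : E 1 3 ∈ mm := gen_mem' 1 3 (by right;right;right;left;rfl)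
    have h1 := h (E 0 2) m1 (E 2 4) m2 (E 0 4) m3
    have h2 := h (E 0 2) m1 (E 0 4) m3 (E 2 4) m2
    have h3 := h (E 2 4) m2 (E 1 3) m4 (E 0 4) m3
    simp only [Bf, projm, Ring.lie_def, LinearMap.coe_mk, AddHom.coe_mk, Matrix.of_apply,
      Matrix.sub_apply, Matrix.mul_apply, Fin.sum_univ_five, E, Matrix.single,
      Fin.reduceEq, and_false, false_and, false_or, or_false, and_true, true_and, and_self,
      if_false, if_true, reduceIte] at h1 h2 h3
    norm_num at h1 h2 h3
    refine ⟨by linarith, by linarith, by linarith⟩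
  · rintro ⟨rfl, rfl, rfl⟩
    intro X hX Y hY Z hZ
    obtain ⟨a, b, c, d, e, f, g, k, rfl⟩ := mem_mm' hX
    obtain ⟨a', b', c', d', e', f', g', k', rfl⟩ := mem_mm' hY
    obtain ⟨a2, b2, c2, d2, e2, f2, g2, k2, rfl⟩ := mem_mm' hZ
    rw [comb_eq', comb_eq', comb_eq']
    exact key' t a b c d e f g k a' b' c' d' e' f' g' k' a2 b2 c2 d2 e2 f2 g2 k2
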